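/- Let K be a complete multipartite graph with parts A_1, …, A_r and let {G_1, …, G_t} be any factorisation of K. Then there exists a factorisation {F_1, …, F_t} of K such that for each i ∈ {1, …, t}: (1) for every pair of distinct parts A_j, A_k, the number of edges of F_i with one endpoint in A_j and the other in A_k equals the number of such edges of G_i; and (2) F_i is almost regular on each part A_j. -/

import Mathlib

open SimpleGraph

namespace EqFact

open Finset
open scoped Classical
set_option linter.unusedSectionVars false
set_option maxHeartbeats 1000000

variable {ι : Type*} [Fintype ι] [DecidableEq ι] {V : ι → Type*}
  [∀ i, Fintype (V i)] [∀ i, DecidableEq (V i)] {t : ℕ}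

/-- The factor graph determined by a colouring of the edges. -/
def Fc (col : Sym2 ((i : ι) × V i) → Fin t) (c : Fin t) : SimpleGraph ((i : ι) × V i) where
  Adj a b := a.1 ≠ b.1 ∧ col s(a, b) = c
  symm := by
    refine ⟨fun a b h => ?_⟩
    exact ⟨h.1.symm, by rw [Sym2.eq_swap]; exact h.2⟩
  loopless := by refine ⟨fun a h => ?_⟩; exact h.1 rfl

lemma fc_adj (col : Sym2 ((i : ι) × V i) → Fin t) (c : Fin t) (a b : (i : ι) × V i) :
    (Fc col c).Adj a b ↔ a.1 ≠ b.1 ∧ col s(a, b) = c := Iff.rfl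

lemma cmg_adj (a b : (i : ι) × V i) :
    (completeMultipartiteGraph V).Adj a b ↔ a.1 ≠ b.1 := Iff.rfl

lemma fc_le (col : Sym2 ((i : ι) × V i) → Fin t) (c : Fin t) :
    Fc col c ≤ completeMultipartiteGraph V := fun _ _ h => h.1

lemma fc_edge_mem (col : Sym2 ((i : ι) × V i) → Fin t) (c : Fin t)
    (e : Sym2 ((i : ι) × V i)) :
    e ∈ (Fc col c).edgeSet ↔ e ∈ (completeMultipartiteGraph V).edgeSet ∧ col e = c := by
  induction e using Sym2.ind with
  | _ a b => simp [SimpleGraph.mem_edgeSet, fc_adj, cmg_adj]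

lemma fc_partition (col : Sym2 ((i : ι) × V i) → Fin t) :
    ∀ e ∈ (completeMultipartiteGraph V).edgeSet, ∃! c, e ∈ (Fc col c).edgeSet := by
  intro e he
  refine ⟨col e, (fc_edge_mem _ _ _).2 ⟨he, rfl⟩, ?_⟩
  intro c hc
  exact ((fc_edge_mem _ _ _).1 hc).2.symm

/-- Degree of `v` in colour `c`. -/
noncomputable def Dg (col : Sym2 ((i : ι) × V i) → Fin t) (c : Fin t) (v : (i : ι) × V i) : ℕ :=
  (univ.filter fun x => v.1 ≠ x.1 ∧ col s(v, x) = c).card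

lemma ncard_neighborSet_eq_Dg (col : Sym2 ((i : ι) × V i) → Fin t) (c : Fin t)
    (v : (i : ι) × V i) : ((Fc col c).neighborSet v).ncard = Dg col c v := by
  rw [Dg, ← Set.ncard_coe_finset]
  congr 1
  ext x
  simp [SimpleGraph.neighborSet, fc_adj]

/-- Count of ordered pairs of adjacent vertices with parts `j`, `k`. -/
noncomputable def Cnt (H : SimpleGraph ((i : ι) × V i)) (j k : ι) : ℕ :=
  {p : ((i : ι) × V i) × ((i : ι) × V i) | H.Adj p.1 p.2 ∧ p.1.1 = j ∧ p.2.1 = k}.ncard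

/-- The potential function. -/
noncomputable def Phi (col : Sym2 ((i : ι) × V i) → Fin t) : ℕ :=
  ∑ v : (i : ι) × V i, ∑ c : Fin t, (Dg col c v) ^ 2

/-- swap of two vertices -/
def swp (U W : (i : ι) × V i) (a : (i : ι) × V i) : (i : ι) × V i :=
  if a = U then W else if a = W then U else a

lemma swp_invol (U W : (i : ι) × V i) : Function.Involutive (swp U W) := by
  intro a
  unfold swp
  by_cases h1 : a = U <;> by_cases h2 : a = W <;> simp_all <;> split_ifs <;> simp_all

/-- The recolouring swapping the colours of `s(U,x)` and `s(W,x)` for all `x ∈ X`. -/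
noncomputable def swapCol (col : Sym2 ((i : ι) × V i) → Fin t) (U W : (i : ι) × V i)
    (X : Finset ((i : ι) × V i)) (e : Sym2 ((i : ι) × V i)) : Fin t :=
  if ∃ x ∈ X, x ∈ e then col (e.map (swp U W)) else col e

section Swap

variable {col : Sym2 ((i : ι) × V i) → Fin t} {U W : (i : ι) × V i}
  {X : Finset ((i : ι) × V i)}

-- hypotheses: all of X is outside {U, W}
variable (hXU : ∀ x ∈ X, x ≠ U) (hXW : ∀ x ∈ X, x ≠ W) (hUW : U ≠ W)

include hXU hXW in
lemma swapCol_main {x : (i : ι) × V i} (hx : x ∈ X) :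
    swapCol col U W X s(U, x) = col s(W, x) := by
  rw [swapCol, if_pos ⟨x, hx, by simp⟩, Sym2.map_pair_eq]
  simp [swp, hXU x hx, hXW x hx]

include hXU hXW hUW in
lemma swapCol_main' {x : (i : ι) × V i} (hx : x ∈ X) :
    swapCol col U W X s(W, x) = col s(U, x) := by
  rw [swapCol, if_pos ⟨x, hx, by simp⟩, Sym2.map_pair_eq]
  simp [swp, hXU x hx, hXW x hx, hUW.symm]

lemma swapCol_offX {a b : (i : ι) × V i} (ha : a ∉ X) (hb : b ∉ X) :
    swapCol col U W X s(a, b) = col s(a, b) := by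
  rw [swapCol, if_neg]
  rintro ⟨x, hx, hmem⟩
  rw [Sym2.mem_iff] at hmem
  rcases hmem with rfl | rfl
  · exact ha hx
  · exact hb hx

lemma swapCol_offUW {a b : (i : ι) × V i} (ha : a ≠ U) (ha' : a ≠ W) (hb : b ≠ U)
    (hb' : b ≠ W) : swapCol col U W X s(a, b) = col s(a, b) := by
  rw [swapCol]
  split_ifs with h
  · rw [Sym2.map_pair_eq]
    simp [swp, ha, ha', hb, hb']
  · rfl

end Swap

section Deg

variable {col : Sym2 ((i : ι) × V i) → Fin t} {U W : (i : ι) × V i}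
  {X : Finset ((i : ι) × V i)}

lemma swp_left (U W : (i : ι) × V i) : swp U W U = W := by simp [swp]

lemma swp_right (hUW : U ≠ W) : swp U W W = U := by
  simp [swp, (Ne.symm hUW : W ≠ U)]

lemma swp_other {a : (i : ι) × V i} (h1 : a ≠ U) (h2 : a ≠ W) : swp U W a = a := by
  simp [swp, h1, h2]

variable (hUW1 : U.1 = W.1) (hUW : U ≠ W) (hXadj : ∀ x ∈ X, U.1 ≠ x.1)

include hXadj in
lemma hXU' : ∀ x ∈ X, x ≠ U := by
  intro x hx h
  exact hXadj x hx (by rw [h])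

include hXadj hUW1 in
lemma hXW' : ∀ x ∈ X, x ≠ W := by
  intro x hx h
  exact hXadj x hx (by rw [h, hUW1])

include hUW1 hXadj in
lemma dg_swap_other {v : (i : ι) × V i} (hv : v ∉ X) (hvU : v ≠ U) (hvW : v ≠ W)
    (c : Fin t) : Dg (swapCol col U W X) c v = Dg col c v := by
  unfold Dg
  congr 1
  apply Finset.filter_congr
  intro x _
  by_cases hxX : x ∈ X
  · rw [swapCol_offUW hvU hvW (hXU' hXadj x hxX) (hXW' hUW1 hXadj x hxX)]
  · rw [swapCol_offX hv hxX]

include hUW1 hUW hXadj in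
lemma dg_swap_inX {v : (i : ι) × V i} (hv : v ∈ X) (c : Fin t) :
    Dg (swapCol col U W X) c v = Dg col c v := by
  have hXU := hXU' hXadj
  have hXW := hXW' hUW1 hXadj
  have key : ∀ x : (i : ι) × V i,
      (v.1 ≠ x.1 ∧ swapCol col U W X s(v, x) = c) ↔
      (v.1 ≠ (swp U W x).1 ∧ col s(v, swp U W x) = c) := by
    intro x
    by_cases hxU : x = U
    · subst hxU
      rw [swp_left, Sym2.eq_swap, swapCol_main hXU hXW hv, Sym2.eq_swap, ← hUW1]
    · by_cases hxW : x = W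
      · subst hxW
        rw [swp_right hUW, Sym2.eq_swap, swapCol_main' hXU hXW hUW hv, Sym2.eq_swap, hUW1]
      · rw [swp_other hxU hxW,
          swapCol_offUW (hXU v hv) (hXW v hv) hxU hxW]
  unfold Dg
  apply Finset.card_bij' (fun x _ => swp U W x) (fun x _ => swp U W x)
  · intro a ha
    rw [Finset.mem_filter] at ha ⊢
    exact ⟨Finset.mem_univ _, (key a).1 ha.2⟩
  · intro a ha
    rw [Finset.mem_filter] at ha ⊢
    refine ⟨Finset.mem_univ _, (key (swp U W a)).2 ?_⟩
    rw [swp_invol U W a]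
    exact ha.2
  · intro a _; exact swp_invol U W a
  · intro a _; exact swp_invol U W a

include hUW1 hUW hXadj in
lemma dg_swap_U (c : Fin t) :
    Dg (swapCol col U W X) c U + (X.filter fun x => col s(U, x) = c).card
      = Dg col c U + (X.filter fun x => col s(W, x) = c).card := by
  have hXU := hXU' hXadj
  have hXW := hXW' hUW1 hXadj
  have hsplit : (univ.filter fun x => U.1 ≠ x.1 ∧ swapCol col U W X s(U, x) = c)
      = (X.filter fun x => col s(W, x) = c) ∪
        ((univ.filter fun x => U.1 ≠ x.1 ∧ col s(U, x) = c) \ X) := by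
    ext x
    simp only [Finset.mem_filter, Finset.mem_union, Finset.mem_sdiff, Finset.mem_univ,
      true_and]
    by_cases hxX : x ∈ X
    · rw [swapCol_main hXU hXW hxX]
      have := hXadj x hxX
      tauto
    · rw [swapCol_offX (hXU' hXadj U · rfl) hxX]
      tauto
  have hdisj : Disjoint (X.filter fun x => col s(W, x) = c)
      ((univ.filter fun x => U.1 ≠ x.1 ∧ col s(U, x) = c) \ X) := by
    apply Finset.disjoint_left.2
    intro a ha ha'
    exact (Finset.mem_sdiff.1 ha').2 (Finset.mem_filter.1 ha).1
  have hinter : (univ.filter fun x => U.1 ≠ x.1 ∧ col s(U, x) = c) ∩ X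
      = X.filter fun x => col s(U, x) = c := by
    ext x
    simp only [Finset.mem_inter, Finset.mem_filter, Finset.mem_univ, true_and]
    constructor
    · rintro ⟨⟨-, h2⟩, h3⟩; exact ⟨h3, h2⟩
    · rintro ⟨h1, h2⟩; exact ⟨⟨hXadj x h1, h2⟩, h1⟩
  have hcs := Finset.card_sdiff_add_card_inter
    (univ.filter fun x => U.1 ≠ x.1 ∧ col s(U, x) = c) X
  rw [hinter] at hcs
  unfold Dg
  rw [hsplit, Finset.card_union_of_disjoint hdisj]
  omega

include hUW1 hUW hXadj in
lemma dg_swap_W (c : Fin t) :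
    Dg (swapCol col U W X) c W + (X.filter fun x => col s(W, x) = c).card
      = Dg col c W + (X.filter fun x => col s(U, x) = c).card := by
  have hXU := hXU' hXadj
  have hXW := hXW' hUW1 hXadj
  have hsplit : (univ.filter fun x => W.1 ≠ x.1 ∧ swapCol col U W X s(W, x) = c)
      = (X.filter fun x => col s(U, x) = c) ∪
        ((univ.filter fun x => W.1 ≠ x.1 ∧ col s(W, x) = c) \ X) := by
    ext x
    simp only [Finset.mem_filter, Finset.mem_union, Finset.mem_sdiff, Finset.mem_univ,
      true_and]
    by_cases hxX : x ∈ X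
    · rw [swapCol_main' hXU hXW hUW hxX]
      have := hXadj x hxX
      rw [← hUW1]
      tauto
    · rw [swapCol_offX (hXW' hUW1 hXadj W · rfl) hxX]
      tauto
  have hdisj : Disjoint (X.filter fun x => col s(U, x) = c)
      ((univ.filter fun x => W.1 ≠ x.1 ∧ col s(W, x) = c) \ X) := by
    apply Finset.disjoint_left.2
    intro a ha ha'
    exact (Finset.mem_sdiff.1 ha').2 (Finset.mem_filter.1 ha).1
  have hinter : (univ.filter fun x => W.1 ≠ x.1 ∧ col s(W, x) = c) ∩ X
      = X.filter fun x => col s(W, x) = c := by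
    ext x
    simp only [Finset.mem_inter, Finset.mem_filter, Finset.mem_univ, true_and]
    constructor
    · rintro ⟨⟨-, h2⟩, h3⟩; exact ⟨h3, h2⟩
    · rintro ⟨h1, h2⟩; exact ⟨⟨fun h => hXadj x h1 (hUW1.trans h), h2⟩, h1⟩
  have hcs := Finset.card_sdiff_add_card_inter
    (univ.filter fun x => W.1 ≠ x.1 ∧ col s(W, x) = c) X
  rw [hinter] at hcs
  unfold Dg
  rw [hsplit, Finset.card_union_of_disjoint hdisj]
  omega

end Deg

section Cnt

variable {col : Sym2 ((i : ι) × V i) → Fin t} {U W : (i : ι) × V i}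
  {X : Finset ((i : ι) × V i)}

variable (hUW1 : U.1 = W.1) (hUW : U ≠ W) (hXadj : ∀ x ∈ X, U.1 ≠ x.1)

include hUW1 hUW hXadj in
lemma cnt_swap (c : Fin t) (j k : ι) :
    Cnt (Fc (swapCol col U W X) c) j k = Cnt (Fc col c) j k := by
  have hXU := hXU' hXadj
  have hXW := hXW' hUW1 hXadj
  set τ : ((i : ι) × V i) × ((i : ι) × V i) → ((i : ι) × V i) × ((i : ι) × V i) :=
    fun p => if p.1 ∈ X ∧ (p.2 = U ∨ p.2 = W) then (p.1, swp U W p.2)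
      else if p.2 ∈ X ∧ (p.1 = U ∨ p.1 = W) then (swp U W p.1, p.2) else p with hτ
  have hswpUW : ∀ a : (i : ι) × V i, (a = U ∨ a = W) → (swp U W a = U ∨ swp U W a = W) := by
    rintro a (rfl | rfl)
    · rw [swp_left]; right; rfl
    · rw [swp_right hUW]; left; rfl
  have hswpX : ∀ a : (i : ι) × V i, (a = U ∨ a = W) → swp U W a ∉ X := by
    rintro a h hmem
    rcases hswpUW a h with h' | h'
    · exact hXU _ hmem h'
    · exact hXW _ hmem h'
  have hXnotUW : ∀ x ∈ X, ¬(x = U ∨ x = W) := by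
    rintro x hx (rfl | rfl)
    · exact hXU x hx rfl
    · exact hXW x hx rfl
  have happ : ∀ q : ((i : ι) × V i) × ((i : ι) × V i),
      τ q = if q.1 ∈ X ∧ (q.2 = U ∨ q.2 = W) then (q.1, swp U W q.2)
        else if q.2 ∈ X ∧ (q.1 = U ∨ q.1 = W) then (swp U W q.1, q.2) else q := fun _ => rfl
  have hinv : Function.Involutive τ := by
    intro p
    by_cases h1 : p.1 ∈ X ∧ (p.2 = U ∨ p.2 = W)
    · have e1 : τ p = (p.1, swp U W p.2) := by rw [happ, if_pos h1]
      have h1' : (p.1, swp U W p.2).1 ∈ X ∧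
          ((p.1, swp U W p.2).2 = U ∨ (p.1, swp U W p.2).2 = W) := ⟨h1.1, hswpUW _ h1.2⟩
      have e2 : τ (p.1, swp U W p.2) = (p.1, swp U W (swp U W p.2)) := by
        rw [happ, if_pos h1']
      rw [e1, e2, swp_invol U W p.2]
    · by_cases h2 : p.2 ∈ X ∧ (p.1 = U ∨ p.1 = W)
      · have e1 : τ p = (swp U W p.1, p.2) := by rw [happ, if_neg h1, if_pos h2]
        have hA : ¬((swp U W p.1, p.2).1 ∈ X ∧
            ((swp U W p.1, p.2).2 = U ∨ (swp U W p.1, p.2).2 = W)) := by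
          intro hcon
          exact hswpX _ h2.2 hcon.1
        have hB : (swp U W p.1, p.2).2 ∈ X ∧
            ((swp U W p.1, p.2).1 = U ∨ (swp U W p.1, p.2).1 = W) := ⟨h2.1, hswpUW _ h2.2⟩
        have e2 : τ (swp U W p.1, p.2) = (swp U W (swp U W p.1), p.2) := by
          rw [happ, if_neg hA, if_pos hB]
        rw [e1, e2, swp_invol U W p.1]
      · have e1 : τ p = p := by rw [happ, if_neg h1, if_neg h2]
        rw [e1, e1]
  -- part components are preserved
  have hfst : ∀ p, (τ p).1.1 = p.1.1 := by
    intro p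
    rw [happ]
    split_ifs with h1 h2
    · rfl
    · rcases h2.2 with h | h <;> rw [h]
      · rw [swp_left, ← hUW1]
      · rw [swp_right hUW, hUW1]
    · rfl
  have hsnd : ∀ p, (τ p).2.1 = p.2.1 := by
    intro p
    rw [happ]
    split_ifs with h1 h2
    · rcases h1.2 with h | h <;> rw [h]
      · rw [swp_left, ← hUW1]
      · rw [swp_right hUW, hUW1]
    · rfl
    · rfl
  -- the colour/adjacency is transported
  have hcol : ∀ p : ((i : ι) × V i) × ((i : ι) × V i),
      swapCol col U W X s(p.1, p.2) = col s((τ p).1, (τ p).2) := by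
    intro p
    rw [happ]
    by_cases h1 : p.1 ∈ X ∧ (p.2 = U ∨ p.2 = W)
    · rw [if_pos h1]
      rcases h1.2 with h | h <;> rw [h]
      · rw [swp_left, Sym2.eq_swap, swapCol_main hXU hXW h1.1, Sym2.eq_swap]
      · rw [swp_right hUW, Sym2.eq_swap, swapCol_main' hXU hXW hUW h1.1, Sym2.eq_swap]
    · rw [if_neg h1]
      by_cases h2 : p.2 ∈ X ∧ (p.1 = U ∨ p.1 = W)
      · rw [if_pos h2]
        rcases h2.2 with h | h <;> rw [h]
        · rw [swp_left, swapCol_main hXU hXW h2.1]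
        · rw [swp_right hUW, swapCol_main' hXU hXW hUW h2.1]
      · rw [if_neg h2]
        by_cases hA : p.1 = U ∨ p.1 = W
        · have hp2X : p.2 ∉ X := fun hcon => h2 ⟨hcon, hA⟩
          have hp1X : p.1 ∉ X := fun hcon => hXnotUW _ hcon hA
          exact swapCol_offX hp1X hp2X
        · by_cases hB : p.2 = U ∨ p.2 = W
          · have hp1X : p.1 ∉ X := fun hcon => h1 ⟨hcon, hB⟩
            have hp2X : p.2 ∉ X := fun hcon => hXnotUW _ hcon hB
            exact swapCol_offX hp1X hp2X
          · push_neg at hA hB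
            exact swapCol_offUW hA.1 hA.2 hB.1 hB.2
  have hadj : ∀ p : ((i : ι) × V i) × ((i : ι) × V i),
      (p.1.1 ≠ p.2.1) ↔ ((τ p).1.1 ≠ (τ p).2.1) := by
    intro p
    rw [hfst, hsnd]
  have hmem : ∀ p, p ∈ {p : ((i : ι) × V i) × ((i : ι) × V i) |
        (Fc (swapCol col U W X) c).Adj p.1 p.2 ∧ p.1.1 = j ∧ p.2.1 = k} ↔
      τ p ∈ {p : ((i : ι) × V i) × ((i : ι) × V i) |
        (Fc col c).Adj p.1 p.2 ∧ p.1.1 = j ∧ p.2.1 = k} := by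
    intro p
    simp only [Set.mem_setOf_eq, fc_adj]
    rw [← hcol p, ← hadj p, hfst, hsnd]
  have himg : {p : ((i : ι) × V i) × ((i : ι) × V i) |
        (Fc (swapCol col U W X) c).Adj p.1 p.2 ∧ p.1.1 = j ∧ p.2.1 = k} =
      τ '' {p : ((i : ι) × V i) × ((i : ι) × V i) |
        (Fc col c).Adj p.1 p.2 ∧ p.1.1 = j ∧ p.2.1 = k} := by
    ext p
    rw [hmem p]
    constructor
    · intro h
      exact ⟨τ p, h, hinv p⟩
    · rintro ⟨q, hq, rfl⟩
      rwa [hinv q]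
  unfold Cnt
  rw [himg, Set.ncard_image_of_injective _ hinv.injective]

end Cnt

end EqFact

/-- Reachability with an explicit set of distinct witnesses. -/
inductive ReachW {α : Type*} [DecidableEq α] {t : ℕ} (col : Sym2 α → Fin t) (N : α → Prop)
    (U W : α) (a : Fin t) : Finset α → Fin t → Prop
  | refl : ReachW col N U W a ∅ a
  | tail {X : Finset α} {b c : Fin t} {x : α} (h : ReachW col N U W a X b) (hN : N x)
      (hx : x ∉ X) (hU : col s(U, x) = b) (hW : col s(W, x) = c) :
      ReachW col N U W a (insert x X) c

namespace ReachW

variable {α : Type*} [DecidableEq α] {t : ℕ} {col : Sym2 α → Fin t} {N : α → Prop}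
    {U W : α} {a : Fin t}

lemma adj {X : Finset α} {b : Fin t} (h : ReachW col N U W a X b) : ∀ x ∈ X, N x := by
  induction h with
  | refl => simp
  | tail h hN hx hU hW ih =>
    intro y hy
    rcases Finset.mem_insert.1 hy with rfl | hy'
    · exact hN
    · exact ih y hy'

lemma step {X : Finset α} {b : Fin t} (h : ReachW col N U W a X b) :
    ∀ x ∈ X, ∃ X', ReachW col N U W a X' (col s(W, x)) := by
  induction h with
  | refl => simp
  | @tail X b c x h hN hx hU hW ih =>
    intro y hy
    rcases Finset.mem_insert.1 hy with rfl | hy'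
    · exact ⟨insert y X, hW ▸ ReachW.tail h hN hx hU hW⟩
    · exact ih y hy'

open scoped Classical in
lemma effect {X : Finset α} {b : Fin t} (h : ReachW col N U W a X b) (c : Fin t) :
    (X.filter fun x => col s(W, x) = c).card + (if a = c then 1 else 0)
      = (X.filter fun x => col s(U, x) = c).card + (if b = c then 1 else 0) := by
  induction h with
  | refl => simp
  | @tail X b d x h hN hx hU hW ih =>
    subst hU
    subst hW
    rw [Finset.filter_insert, Finset.filter_insert]
    have hxW : x ∉ X.filter fun x => col s(W, x) = c := fun hc => hx (Finset.mem_filter.1 hc).1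
    have hxU : x ∉ X.filter fun x => col s(U, x) = c := fun hc => hx (Finset.mem_filter.1 hc).1
    split_ifs at ih ⊢ <;>
      simp -failIfUnchanged only [Finset.card_insert_of_notMem hxW, Finset.card_insert_of_notMem hxU] at * <;>
      omega

lemma of_reflTransGen {b : Fin t}
    (h : Relation.ReflTransGen (fun b c => ∃ x, N x ∧ col s(U, x) = b ∧ col s(W, x) = c) a b) :
    ∃ X, ReachW col N U W a X b := by
  induction h with
  | refl => exact ⟨∅, ReachW.refl⟩
  | tail hab hbc ih =>
    obtain ⟨X, hX⟩ := ih
    obtain ⟨x, hN, hU, hW⟩ := hbc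
    by_cases hx : x ∈ X
    · obtain ⟨X', hX'⟩ := hX.step x hx
      exact ⟨X', hW ▸ hX'⟩
    · exact ⟨insert x X, ReachW.tail hX hN hx hU hW⟩

end ReachW

namespace EqFact

open Finset
open scoped Classical
set_option linter.unusedSectionVars false

variable {ι : Type*} [Fintype ι] [DecidableEq ι] {V : ι → Type*}
  [∀ i, Fintype (V i)] [∀ i, DecidableEq (V i)] {t : ℕ}

lemma fiber_card (col : Sym2 ((i : ι) × V i) → Fin t) (v : (i : ι) × V i)
    (Rfin : Finset (Fin t)) :
    (univ.filter fun x => v.1 ≠ x.1 ∧ col s(v, x) ∈ Rfin).card = ∑ b ∈ Rfin, Dg col b v := by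
  rw [Finset.card_eq_sum_card_fiberwise (f := fun x => col s(v, x)) (t := Rfin)
    (fun x hx => (mem_filter.1 hx).2.2)]
  apply Finset.sum_congr rfl
  intro b hb
  rw [Dg]
  congr 1
  ext x
  simp only [Finset.mem_filter, Finset.mem_univ, true_and]
  constructor
  · rintro ⟨⟨h1, _⟩, h3⟩; exact ⟨h1, h3⟩
  · rintro ⟨h1, h3⟩; exact ⟨⟨h1, by rw [h3]; exact hb⟩, h3⟩

lemma key (col col0 : Sym2 ((i : ι) × V i) → Fin t)
    (hval : ∀ c j k, Cnt (Fc col c) j k = Cnt (Fc col0 c) j k)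
    (hmin : ∀ col₂ : Sym2 ((i : ι) × V i) → Fin t,
      (∀ c j k, Cnt (Fc col₂ c) j k = Cnt (Fc col0 c) j k) → Phi col ≤ Phi col₂)
    (U W : (i : ι) × V i) (hUW1 : U.1 = W.1) (c0 : Fin t) :
    Dg col c0 U ≤ Dg col c0 W + 1 := by
  by_contra hcon
  have hD : Dg col c0 W + 2 ≤ Dg col c0 U := by omega
  have hUW : U ≠ W := by rintro rfl; omega
  set Rel : Fin t → Fin t → Prop :=
    fun b c => ∃ x, U.1 ≠ x.1 ∧ col s(U, x) = b ∧ col s(W, x) = c with hRel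
  set Rfin : Finset (Fin t) := univ.filter fun b => Relation.ReflTransGen Rel c0 b with hRfin
  have hmemR : ∀ b, b ∈ Rfin ↔ Relation.ReflTransGen Rel c0 b := by
    intro b
    rw [hRfin, mem_filter]
    simp
  -- Step 1 : the sum of degrees of U over reachable colours is at most that of W
  have hstep1 : ∑ b ∈ Rfin, Dg col b U ≤ ∑ b ∈ Rfin, Dg col b W := by
    rw [← fiber_card col U Rfin, ← fiber_card col W Rfin]
    apply Finset.card_le_card
    intro x hx
    rw [mem_filter] at hx ⊢
    refine ⟨mem_univ _, by rw [← hUW1]; exact hx.2.1, ?_⟩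
    rw [hmemR]
    exact ((hmemR _).1 hx.2.2).tail ⟨x, hx.2.1, rfl, rfl⟩
  -- Step 2 : find a reachable colour where W has strictly larger degree
  have hc0R : c0 ∈ Rfin := (hmemR c0).2 Relation.ReflTransGen.refl
  have hex : ∃ b ∈ Rfin, Dg col b U < Dg col b W := by
    by_contra hno
    push_neg at hno
    have : ∑ b ∈ Rfin, Dg col b W < ∑ b ∈ Rfin, Dg col b U :=
      Finset.sum_lt_sum hno ⟨c0, hc0R, by omega⟩
    omega
  obtain ⟨c1, hc1R, hlt⟩ := hex
  have hc1 : c1 ≠ c0 := by rintro rfl; omega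
  have hrtg : Relation.ReflTransGen Rel c0 c1 := (hmemR c1).1 hc1R
  rw [hRel] at hrtg
  obtain ⟨X, hX⟩ := ReachW.of_reflTransGen (N := fun x : (i : ι) × V i => U.1 ≠ x.1) hrtg
  have hXadj : ∀ x ∈ X, U.1 ≠ x.1 := hX.adj
  -- the swapped colouring
  have hval' : ∀ c j k, Cnt (Fc (swapCol col U W X) c) j k = Cnt (Fc col0 c) j k := by
    intro c j k
    rw [cnt_swap hUW1 hUW hXadj, hval]
  -- degree identities for the swapped colouring
  have hdU : ∀ c, Dg (swapCol col U W X) c U + (if c0 = c then 1 else 0)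
      = Dg col c U + (if c1 = c then 1 else 0) := by
    intro c
    have h1 := dg_swap_U hUW1 hUW hXadj (col := col) c
    have h2 := hX.effect c
    omega
  have hdW : ∀ c, Dg (swapCol col U W X) c W + (if c1 = c then 1 else 0)
      = Dg col c W + (if c0 = c then 1 else 0) := by
    intro c
    have h1 := dg_swap_W hUW1 hUW hXadj (col := col) c
    have h2 := hX.effect c
    omega
  have hdO : ∀ v, v ≠ U → v ≠ W → ∀ c, Dg (swapCol col U W X) c v = Dg col c v := by
    intro v hvU hvW c
    by_cases hvX : v ∈ X
    · exact dg_swap_inX hUW1 hUW hXadj hvX c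
    · exact dg_swap_other hUW1 hXadj hvX hvU hvW c
  -- explicit degree values
  have hUc0 : (Dg (swapCol col U W X) c0 U : ℤ) = Dg col c0 U - 1 := by
    have := hdU c0
    rw [if_pos rfl, if_neg hc1] at this
    omega
  have hUc1 : (Dg (swapCol col U W X) c1 U : ℤ) = Dg col c1 U + 1 := by
    have := hdU c1
    rw [if_pos rfl, if_neg (Ne.symm hc1)] at this
    omega
  have hWc0 : (Dg (swapCol col U W X) c0 W : ℤ) = Dg col c0 W + 1 := by
    have := hdW c0
    rw [if_pos rfl, if_neg hc1] at this
    omega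
  have hWc1 : (Dg (swapCol col U W X) c1 W : ℤ) = Dg col c1 W - 1 := by
    have := hdW c1
    rw [if_pos rfl, if_neg (Ne.symm hc1)] at this
    omega
  have hUother : ∀ c, c ≠ c0 → c ≠ c1 → Dg (swapCol col U W X) c U = Dg col c U := by
    intro c h1 h2
    have := hdU c
    rw [if_neg (Ne.symm h1), if_neg (Ne.symm h2)] at this
    omega
  have hWother : ∀ c, c ≠ c0 → c ≠ c1 → Dg (swapCol col U W X) c W = Dg col c W := by
    intro c h1 h2
    have := hdW c
    rw [if_neg (Ne.symm h1), if_neg (Ne.symm h2)] at this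
    omega
  -- Phi strictly decreases
  have hphidiff : (Phi (swapCol col U W X) : ℤ) - (Phi col : ℤ) =
      ∑ v : (i : ι) × V i, ∑ c : Fin t,
        ((Dg (swapCol col U W X) c v : ℤ) ^ 2 - (Dg col c v : ℤ) ^ 2) := by
    rw [Phi, Phi]
    push_cast
    rw [← Finset.sum_sub_distrib]
    apply Finset.sum_congr rfl
    intro v _
    rw [← Finset.sum_sub_distrib]
  have hinner : ∀ v : (i : ι) × V i,
      (fun v => ∑ c : Fin t, ((Dg (swapCol col U W X) c v : ℤ) ^ 2 - (Dg col c v : ℤ) ^ 2)) v ≠ 0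
      → v ∈ ({U, W} : Finset ((i : ι) × V i)) := by
    intro v hv
    by_contra hmem
    rw [Finset.mem_insert, Finset.mem_singleton] at hmem
    push_neg at hmem
    apply hv
    apply Finset.sum_eq_zero
    intro c _
    rw [hdO v hmem.1 hmem.2 c]
    ring
  have houter : (Phi (swapCol col U W X) : ℤ) - (Phi col : ℤ) =
      (∑ c : Fin t, ((Dg (swapCol col U W X) c U : ℤ) ^ 2 - (Dg col c U : ℤ) ^ 2)) +
      (∑ c : Fin t, ((Dg (swapCol col U W X) c W : ℤ) ^ 2 - (Dg col c W : ℤ) ^ 2)) := by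
    have hss : ∑ v ∈ ({U, W} : Finset ((i : ι) × V i)),
        (fun v => ∑ c : Fin t,
          ((Dg (swapCol col U W X) c v : ℤ) ^ 2 - (Dg col c v : ℤ) ^ 2)) v
        = ∑ v : (i : ι) × V i,
          ∑ c : Fin t, ((Dg (swapCol col U W X) c v : ℤ) ^ 2 - (Dg col c v : ℤ) ^ 2) :=
      Finset.sum_subset (Finset.subset_univ _)
        (fun v _ hv => by by_contra hne; exact hv (hinner v hne))
    rw [hphidiff, ← hss, Finset.sum_pair hUW]
  have hsumU : (∑ c : Fin t, ((Dg (swapCol col U W X) c U : ℤ) ^ 2 - (Dg col c U : ℤ) ^ 2)) =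
      (-(2 * (Dg col c0 U : ℤ)) + 1) + (2 * (Dg col c1 U : ℤ) + 1) := by
    have hpair : ∑ c ∈ ({c0, c1} : Finset (Fin t)),
        ((Dg (swapCol col U W X) c U : ℤ) ^ 2 - (Dg col c U : ℤ) ^ 2) =
        ∑ c : Fin t, ((Dg (swapCol col U W X) c U : ℤ) ^ 2 - (Dg col c U : ℤ) ^ 2) := by
      apply Finset.sum_subset (Finset.subset_univ _)
      intro c _ hc
      rw [Finset.mem_insert, Finset.mem_singleton] at hc
      push_neg at hc
      rw [hUother c hc.1 hc.2]
      ring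
    rw [← hpair, Finset.sum_pair (Ne.symm hc1), hUc0, hUc1]
    ring
  have hsumW : (∑ c : Fin t, ((Dg (swapCol col U W X) c W : ℤ) ^ 2 - (Dg col c W : ℤ) ^ 2)) =
      (2 * (Dg col c0 W : ℤ) + 1) + (-(2 * (Dg col c1 W : ℤ)) + 1) := by
    have hpair : ∑ c ∈ ({c0, c1} : Finset (Fin t)),
        ((Dg (swapCol col U W X) c W : ℤ) ^ 2 - (Dg col c W : ℤ) ^ 2) =
        ∑ c : Fin t, ((Dg (swapCol col U W X) c W : ℤ) ^ 2 - (Dg col c W : ℤ) ^ 2) := by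
      apply Finset.sum_subset (Finset.subset_univ _)
      intro c _ hc
      rw [Finset.mem_insert, Finset.mem_singleton] at hc
      push_neg at hc
      rw [hWother c hc.1 hc.2]
      ring
    rw [← hpair, Finset.sum_pair (Ne.symm hc1), hWc0, hWc1]
    ring
  have hphilt : (Phi (swapCol col U W X) : ℤ) < (Phi col : ℤ) := by
    have h := houter
    rw [hsumU, hsumW] at h
    have hDz : (Dg col c0 W : ℤ) + 2 ≤ (Dg col c0 U : ℤ) := by exact_mod_cast hD
    have hltz : (Dg col c1 U : ℤ) < (Dg col c1 W : ℤ) := by exact_mod_cast hlt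
    omega
  have := hmin (swapCol col U W X) hval'
  omega


noncomputable def col0 (G : Fin t → SimpleGraph ((i : ι) × V i))
    (hpart : ∀ e ∈ (completeMultipartiteGraph V).edgeSet, ∃! c, e ∈ (G c).edgeSet)
    (ht : 0 < t) : Sym2 ((i : ι) × V i) → Fin t := fun e =>
  if h : e ∈ (completeMultipartiteGraph V).edgeSet then (hpart e h).choose else ⟨0, ht⟩

lemma fc_col0 (G : Fin t → SimpleGraph ((i : ι) × V i))
    (hle : ∀ c, G c ≤ completeMultipartiteGraph V)
    (hpart : ∀ e ∈ (completeMultipartiteGraph V).edgeSet, ∃! c, e ∈ (G c).edgeSet)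
    (ht : 0 < t) (c : Fin t) : Fc (col0 G hpart ht) c = G c := by
  ext a b
  rw [fc_adj]
  constructor
  · rintro ⟨hne, hc⟩
    have he : s(a, b) ∈ (completeMultipartiteGraph V).edgeSet :=
      (SimpleGraph.mem_edgeSet _).2 hne
    rw [col0, dif_pos he] at hc
    have hmem := (hpart s(a, b) he).choose_spec.1
    rw [hc] at hmem
    exact (SimpleGraph.mem_edgeSet _).1 hmem
  · intro h
    have hK : (completeMultipartiteGraph V).Adj a b := hle c h
    have he : s(a, b) ∈ (completeMultipartiteGraph V).edgeSet :=
      (SimpleGraph.mem_edgeSet _).2 hK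
    refine ⟨hK, ?_⟩
    rw [col0, dif_pos he]
    exact ((hpart s(a, b) he).choose_spec.2 c ((SimpleGraph.mem_edgeSet _).2 h)).symm

end EqFact

open EqFact

theorem equitabilise_factorisation_of_completeMultipartite
    {ι : Type*} [Fintype ι] [DecidableEq ι] (V : ι → Type*)
    [∀ i, Fintype (V i)] [∀ i, DecidableEq (V i)] [∀ i, Nonempty (V i)]
    (t : ℕ) (G : Fin t → SimpleGraph (Σ i, V i))
    (hle : ∀ i, G i ≤ completeMultipartiteGraph V)
    (hpart : ∀ e ∈ (completeMultipartiteGraph V).edgeSet, ∃! i, e ∈ (G i).edgeSet) :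
    ∃ F : Fin t → SimpleGraph (Σ i, V i),
      (∀ i, F i ≤ completeMultipartiteGraph V) ∧
      (∀ e ∈ (completeMultipartiteGraph V).edgeSet, ∃! i, e ∈ (F i).edgeSet) ∧
      -- (1) for distinct parts `A_j, A_k`, `F i` and `G i` have the same number of
      -- edges with one endpoint in `A_j` and the other in `A_k`
      (∀ i, ∀ j k : ι, j ≠ k →
        {p : (Σ i, V i) × (Σ i, V i) | (F i).Adj p.1 p.2 ∧ p.1.1 = j ∧ p.2.1 = k}.ncard =
        {p : (Σ i, V i) × (Σ i, V i) | (G i).Adj p.1 p.2 ∧ p.1.1 = j ∧ p.2.1 = k}.ncard) ∧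
      -- (2) each `F i` is almost regular on each part `A_j`
      (∀ i (j : ι) (u w : V j),
        |(((F i).neighborSet ⟨j, u⟩).ncard : ℤ) - (((F i).neighborSet ⟨j, w⟩).ncard : ℤ)| ≤ 1) := by
  classical
  rcases Nat.eq_zero_or_pos t with ht | ht
  · subst ht
    exact ⟨G, hle, hpart, fun i => i.elim0, fun i => i.elim0⟩
  · set c₀ := EqFact.col0 G hpart ht with hc₀
    have hP : ∃ n, ∃ col, (∀ c j k, EqFact.Cnt (EqFact.Fc col c) j k
        = EqFact.Cnt (EqFact.Fc c₀ c) j k) ∧ EqFact.Phi col = n :=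
      ⟨EqFact.Phi c₀, c₀, fun _ _ _ => rfl, rfl⟩
    obtain ⟨col, hval, hPhi⟩ := Nat.find_spec hP
    have hmin : ∀ col₂ : Sym2 (Σ i, V i) → Fin t,
        (∀ c j k, EqFact.Cnt (EqFact.Fc col₂ c) j k = EqFact.Cnt (EqFact.Fc c₀ c) j k) →
        EqFact.Phi col ≤ EqFact.Phi col₂ := by
      intro col₂ h₂
      rw [hPhi]
      exact Nat.find_min' hP ⟨col₂, h₂, rfl⟩
    refine ⟨EqFact.Fc col, EqFact.fc_le col, EqFact.fc_partition col, ?_, ?_⟩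
    · intro i j k _
      have h1 : EqFact.Cnt (EqFact.Fc col i) j k = EqFact.Cnt (EqFact.Fc c₀ i) j k :=
        hval i j k
      rw [hc₀, EqFact.fc_col0 G hle hpart ht i] at h1
      exact h1
    · intro i j u w
      rw [EqFact.ncard_neighborSet_eq_Dg, EqFact.ncard_neighborSet_eq_Dg]
      have h1 := EqFact.key col c₀ hval hmin ⟨j, u⟩ ⟨j, w⟩ rfl i
      have h2 := EqFact.key col c₀ hval hmin ⟨j, w⟩ ⟨j, u⟩ rfl i
      rw [abs_sub_le_iff]
      constructor <;> omega
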